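/- Let F : ℝ^d → ℝ be differentiable with L_θ-Lipschitz gradient (L_θ > 0). Let T ≥ 1, let step-sizes η_t satisfy 0 < η_t ≤ 1/(4L_θ) for t = 0,…,T−1, and let sequences θ^0, …, θ^T ∈ ℝ^d and g̃^0, …, g̃^{T−1} ∈ ℝ^d satisfy θ^{t+1} = θ^t + η_t g̃^t. Suppose there is Δ ≥ 0 with ‖g̃^t − ∇F(θ^t)‖² ≤ Δ for all t = 0,…,T−1. Then (∑_{t=0}^{T−1} η_t ‖∇F(θ^t)‖²) / (∑_{t=0}^{T−1} η_t) ≤ 4(F(θ^T) − F(θ^0)) / (∑_{t=0}^{T−1} η_t) + 3Δ. -/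

import Mathlib

open RealInnerProductSpace intervalIntegral

/-- Descent lemma: for `F` with `L`-Lipschitz gradient,
`F (x + v) - F x ≥ ⟪∇F x, v⟫ - L/2 * ‖v‖²`. -/
theorem descent_aux {d : ℕ} (F : EuclideanSpace ℝ (Fin d) → ℝ) (L : ℝ) (hL : 0 ≤ L)
    (hF : Differentiable ℝ F)
    (hLip : ∀ x y, ‖gradient F x - gradient F y‖ ≤ L * ‖x - y‖)
    (x v : EuclideanSpace ℝ (Fin d)) :
    ⟪gradient F x, v⟫ - L / 2 * ‖v‖ ^ 2 ≤ F (x + v) - F x := by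
  set φ' : ℝ → ℝ := fun t => ⟪gradient F (x + t • v), v⟫ with hφ'
  have hgcont : Continuous (fun y => gradient F y) := by
    apply LipschitzWith.continuous (K := L.toNNReal)
    apply LipschitzWith.of_dist_le_mul
    intro a b
    rw [dist_eq_norm, dist_eq_norm, Real.coe_toNNReal _ hL]
    exact hLip a b
  have hcont : Continuous φ' := by
    exact (hgcont.comp (by continuity)).inner continuous_const
  have hderiv : ∀ t : ℝ, HasDerivAt (fun s => F (x + s • v)) (φ' t) t := by
    intro t
    have h2 : HasDerivAt (fun s : ℝ => x + s • v) v t := by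
      simpa using ((hasDerivAt_id t).smul_const v).const_add x
    have h1 := ((hF (x + t • v)).hasGradientAt).hasFDerivAt
    have := h1.comp_hasDerivAt t h2
    simp [InnerProductSpace.toDual_apply_apply, hφ', inner_gradient_left] at this ⊢; exact this
  have hftc : ∫ t in (0:ℝ)..1, φ' t = F (x + v) - F x := by
    have := intervalIntegral.integral_eq_sub_of_hasDerivAt
      (f := fun s => F (x + s • v)) (f' := φ')
      (fun t _ => hderiv t) (hcont.intervalIntegrable 0 1)
    simpa using this
  have hbound : ∀ t ∈ Set.Icc (0:ℝ) 1, ⟪gradient F x, v⟫ - L * ‖v‖^2 * t ≤ φ' t := by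
    intro t ht
    have key : |φ' t - ⟪gradient F x, v⟫| ≤ L * ‖v‖^2 * t := by
      have h1 : φ' t - ⟪gradient F x, v⟫ = ⟪gradient F (x + t • v) - gradient F x, v⟫ := by
        rw [inner_sub_left]
      rw [h1]
      calc |⟪gradient F (x + t • v) - gradient F x, v⟫| ≤
            ‖gradient F (x + t • v) - gradient F x‖ * ‖v‖ := abs_real_inner_le_norm _ _
        _ ≤ (L * ‖x + t • v - x‖) * ‖v‖ := by
            gcongr; exact hLip _ _
        _ = L * ‖v‖^2 * t := by
            have : x + t • v - x = t • v := by abel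
            rw [this, norm_smul, Real.norm_eq_abs, abs_of_nonneg ht.1]; ring
    have := (abs_le.mp key).1
    linarith
  have hmono : ∫ t in (0:ℝ)..1, (⟪gradient F x, v⟫ - L * ‖v‖^2 * t) ≤ ∫ t in (0:ℝ)..1, φ' t := by
    apply intervalIntegral.integral_mono_on (by norm_num)
    · exact ((continuous_const.sub (continuous_const.mul continuous_id)).intervalIntegrable 0 1)
    · exact hcont.intervalIntegrable 0 1
    · exact hbound
  have hval : ∫ t in (0:ℝ)..1, (⟪gradient F x, v⟫ - L * ‖v‖^2 * t)
      = ⟪gradient F x, v⟫ - L / 2 * ‖v‖^2 := by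
    have hInt : IntervalIntegrable (fun t : ℝ => L * ‖v‖^2 * t) MeasureTheory.volume 0 1 :=
      (by fun_prop : Continuous fun t : ℝ => L * ‖v‖^2 * t).intervalIntegrable 0 1
    rw [intervalIntegral.integral_sub intervalIntegrable_const hInt]
    rw [intervalIntegral.integral_const_mul, integral_id]
    simp
    ring
  rw [hval, hftc] at hmono
  exact hmono
/-- Deterministic content of Theorem 1: gradient ascent with inexact gradients
`g̃^t` (each with squared error at most `Δ`) and step-sizes `0 < η_t ≤ 1/(4Lθ)`
converges to approximate stationarity. -/
theorem stmt5 {d : ℕ} (F : EuclideanSpace ℝ (Fin d) → ℝ) (Lθ : ℝ) (hLθ : 0 < Lθ)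
    (hF : Differentiable ℝ F)
    (hLip : ∀ x y, ‖gradient F x - gradient F y‖ ≤ Lθ * ‖x - y‖)
    (T : ℕ) (hT : 1 ≤ T)
    (η : ℕ → ℝ) (hη : ∀ t < T, 0 < η t) (hη' : ∀ t < T, η t ≤ 1 / (4 * Lθ))
    (θ : ℕ → EuclideanSpace ℝ (Fin d)) (gt : ℕ → EuclideanSpace ℝ (Fin d))
    (hupd : ∀ t < T, θ (t + 1) = θ t + η t • gt t)
    (Δ : ℝ) (hΔ : 0 ≤ Δ)
    (herr : ∀ t < T, ‖gt t - gradient F (θ t)‖ ^ 2 ≤ Δ) :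
    (∑ t ∈ Finset.range T, η t * ‖gradient F (θ t)‖ ^ 2) / (∑ t ∈ Finset.range T, η t) ≤
      4 * (F (θ T) - F (θ 0)) / (∑ t ∈ Finset.range T, η t) + 3 * Δ := by
  set S := ∑ t ∈ Finset.range T, η t with hS
  have hSpos : 0 < S := Finset.sum_pos (fun i hi => hη i (Finset.mem_range.mp hi))
    (Finset.nonempty_range_iff.mpr (by omega))
  -- per-step inequality
  have key : ∀ t < T,
      η t * (‖gradient F (θ t)‖ ^ 2 / 4 - 3 * Δ / 4) ≤ F (θ (t + 1)) - F (θ t) := by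
    intro t ht
    have hdesc := descent_aux F Lθ hLθ.le hF hLip (θ t) (η t • gt t)
    rw [← hupd t ht] at hdesc
    set G := ‖gradient F (θ t)‖ with hG
    set E := ‖gt t - gradient F (θ t)‖ with hE
    have hG0 : 0 ≤ G := norm_nonneg _
    have hE0 : 0 ≤ E := norm_nonneg _
    have hE2 : E ^ 2 ≤ Δ := herr t ht
    have hηt : 0 < η t := hη t ht
    have hηL : Lθ * η t ≤ 1 / 4 := by
      have h := hη' t ht
      calc Lθ * η t ≤ Lθ * (1 / (4 * Lθ)) := mul_le_mul_of_nonneg_left h hLθ.le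
        _ = 1 / 4 := by field_simp
    -- inner product lower bound
    have hip : G ^ 2 - G * E ≤ ⟪gradient F (θ t), gt t⟫ := by
      have h1 : ⟪gradient F (θ t), gt t⟫
          = ⟪gradient F (θ t), gradient F (θ t)⟫
            + ⟪gradient F (θ t), gt t - gradient F (θ t)⟫ := by
        rw [inner_sub_right]; ring
      have h2 : ⟪gradient F (θ t), gradient F (θ t)⟫ = G ^ 2 := by
        rw [hG]; exact real_inner_self_eq_norm_sq _
      have h3 : |⟪gradient F (θ t), gt t - gradient F (θ t)⟫| ≤ G * E := by
        rw [hG, hE]; exact abs_real_inner_le_norm _ _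
      have := (abs_le.mp h3).1
      linarith
    -- norm of gt bound
    have hN : ‖gt t‖ ≤ G + E := by
      calc ‖gt t‖ = ‖gradient F (θ t) + (gt t - gradient F (θ t))‖ := by congr 1; abel
        _ ≤ G + E := norm_add_le _ _
    have hNsq : ‖gt t‖ ^ 2 ≤ 2 * G ^ 2 + 2 * E ^ 2 := by
      nlinarith [sq_nonneg (G - E), norm_nonneg (gt t)]
    have hinner : ⟪gradient F (θ t), η t • gt t⟫ = η t * ⟪gradient F (θ t), gt t⟫ :=
      real_inner_smul_right _ _ _
    have hnorm : ‖η t • gt t‖ ^ 2 = η t ^ 2 * ‖gt t‖ ^ 2 := by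
      rw [norm_smul, Real.norm_eq_abs, abs_of_pos hηt, mul_pow]
    rw [hinner, hnorm] at hdesc
    have step1 : η t * (G ^ 2 - G * E) ≤ η t * ⟪gradient F (θ t), gt t⟫ :=
      mul_le_mul_of_nonneg_left hip hηt.le
    have step2 : Lθ / 2 * (η t ^ 2 * ‖gt t‖ ^ 2) ≤ η t / 8 * (2 * G ^ 2 + 2 * E ^ 2) := by
      have h3 : Lθ / 2 * (η t ^ 2 * ‖gt t‖ ^ 2) = (Lθ * η t) * (η t * ‖gt t‖ ^ 2) / 2 := by ring
      have h4 : (Lθ * η t) * (η t * ‖gt t‖ ^ 2) ≤ (1/4) * (η t * (2 * G ^ 2 + 2 * E ^ 2)) := by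
        apply mul_le_mul hηL (mul_le_mul_of_nonneg_left hNsq hηt.le)
          (by positivity) (by norm_num)
      rw [h3]; linarith
    nlinarith [sq_nonneg (G - E), mul_le_mul_of_nonneg_left hE2 hηt.le,
      mul_le_mul_of_nonneg_left (sq_nonneg (G - E)) hηt.le]
  -- sum up
  have hsum : ∑ t ∈ Finset.range T, η t * (‖gradient F (θ t)‖ ^ 2 / 4 - 3 * Δ / 4)
      ≤ F (θ T) - F (θ 0) := by
    rw [← Finset.sum_range_sub (fun t => F (θ t))]
    exact Finset.sum_le_sum fun t ht => key t (Finset.mem_range.mp ht)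
  have hexp : ∑ t ∈ Finset.range T, η t * (‖gradient F (θ t)‖ ^ 2 / 4 - 3 * Δ / 4)
      = (∑ t ∈ Finset.range T, η t * ‖gradient F (θ t)‖ ^ 2) / 4 - 3 * Δ / 4 * S := by
    rw [hS, Finset.mul_sum, Finset.sum_div, ← Finset.sum_sub_distrib]
    exact Finset.sum_congr rfl fun t _ => by ring
  rw [hexp] at hsum
  set A := ∑ t ∈ Finset.range T, η t * ‖gradient F (θ t)‖ ^ 2 with hA
  have hfin : A ≤ 4 * (F (θ T) - F (θ 0)) + 3 * Δ * S := by linarith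
  calc A / S ≤ (4 * (F (θ T) - F (θ 0)) + 3 * Δ * S) / S := by
        exact (div_le_div_iff_of_pos_right hSpos).mpr hfin
    _ = 4 * (F (θ T) - F (θ 0)) / S + 3 * Δ := by
        rw [add_div, mul_div_assoc (3 * Δ), div_self hSpos.ne', mul_one]
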